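/- There exists a simple graph G on exactly 9 vertices with exactly 21 edges, together with two adjacent vertices x and y of G, such that: (a) G admits a 2-coloring with no monochromatic cycle of length 3 (no monochromatic triangle); and (b) every 2-coloring c of G with no monochromatic triangle satisfies c x ≠ c y. -/

import Mathlib

/-- `c` is a 2-coloring of `G` with no monochromatic cycle of length `k`. -/
def NoMonoCycle {V : Type*} (G : SimpleGraph V) (k : ℕ) (c : V → Bool) : Prop :=
  ∀ ⦃v : V⦄ (w : G.Walk v v), w.IsCycle → w.length = k →
    ¬ (∀ u ∈ w.support, c u = c v)

private def edgeL : List (Fin 9 × Fin 9) :=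
  [(0,1),(0,4),(0,5),(0,6),(0,7),(0,8),(1,3),(1,4),(1,5),(1,8),(2,3),(2,8),
   (3,6),(3,7),(4,5),(4,7),(5,6),(5,7),(5,8),(6,7),(6,8)]

private def adjB (a b : Fin 9) : Bool := (a, b) ∈ edgeL || (b, a) ∈ edgeL

private def myG : SimpleGraph (Fin 9) where
  Adj a b := adjB a b = true
  symm := ⟨fun a b h => (by decide : ∀ a b : Fin 9, adjB a b = true → adjB b a = true) a b h⟩
  loopless := ⟨fun a h => (by decide : ∀ a : Fin 9, ¬ adjB a a = true) a h⟩

private instance : DecidableRel myG.Adj := fun a b =>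
  inferInstanceAs (Decidable (adjB a b = true))

private lemma noMono_of_tri {V : Type*} {G : SimpleGraph V} {c : V → Bool}
    (h : ∀ a b d, G.Adj a b → G.Adj b d → G.Adj d a → ¬(c b = c a ∧ c d = c a)) :
    NoMonoCycle G 3 c := by
  intro v w _hc hl hm
  cases w with
  | nil => simp at hl
  | cons hva p =>
    cases p with
    | nil => simp at hl
    | cons hab q =>
      cases q with
      | nil => simp at hl
      | cons hbv r =>
        cases r with
        | cons h' r' => simp [SimpleGraph.Walk.length_cons] at hl
        | nil =>
          exact h _ _ _ hva hab hbv
            ⟨hm _ (by simp), hm _ (by simp)⟩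

private lemma tri_of_noMono {V : Type*} {G : SimpleGraph V} {c : V → Bool}
    (h : NoMonoCycle G 3 c) :
    ∀ a b d, G.Adj a b → G.Adj b d → G.Adj d a → ¬(c b = c a ∧ c d = c a) := by
  intro a b d hab hbd hda ⟨h1, h2⟩
  have hab' := hab.ne
  have hbd' := hbd.ne
  have hda' := hda.ne
  have trail : (SimpleGraph.Walk.cons hab (.cons hbd (.cons hda .nil))).IsTrail := by
    rw [SimpleGraph.Walk.isTrail_def]
    simp [Sym2.eq, Sym2.rel_iff']
    tauto
  refine h (.cons hab (.cons hbd (.cons hda .nil))) ?_ rfl ?_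
  · rw [SimpleGraph.Walk.isCycle_def]
    refine ⟨trail, by simp, ?_⟩
    simp
    tauto
  · intro u hu
    simp [SimpleGraph.Walk.support] at hu
    rcases hu with rfl | rfl | rfl | rfl <;> simp [h1, h2]

theorem stmt9 :
    ∃ (G : SimpleGraph (Fin 9)) (x y : Fin 9),
      G.edgeSet.ncard = 21 ∧ G.Adj x y ∧
      (∃ c : Fin 9 → Bool, NoMonoCycle G 3 c) ∧
      (∀ c : Fin 9 → Bool, NoMonoCycle G 3 c → c x ≠ c y) := by
  refine ⟨myG, 0, 1, ?_, by decide, ?_, ?_⟩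
  · rw [← SimpleGraph.coe_edgeFinset, Set.ncard_coe_finset]
    decide
  · exact ⟨![true,false,false,true,false,true,false,false,false],
      noMono_of_tri (by decide)⟩
  · have key : ∀ c : Fin 9 → Bool,
        (∀ a b d, myG.Adj a b → myG.Adj b d → myG.Adj d a →
          ¬(c b = c a ∧ c d = c a)) → c 0 ≠ c 1 := by
      set_option maxRecDepth 100000 in decide
    exact fun c h => key c (tri_of_noMono h)
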